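/- (One-step composite descent inequality.) For any z₁, z₂ ∈ ℝ^p, with x₁ := prox_{γφ}(z₁) and x₂ := prox_{γφ}(z₂), one has ψ(x₂) ≤ ψ(x₁) + ⟪F^nor(z₁), x₂ − x₁⟫ + ((L + ρ)/2 − 1/γ)‖x₂ − x₁‖² + γ^{-1}⟪z₂ − z₁, x₂ − x₁⟫. -/

import Mathlib

open scoped RealInnerProductSpace

section Aux

variable {E : Type*} [NormedAddCommGroup E] [InnerProductSpace ℝ E] [CompleteSpace E]

lemma descent_lemma (L : ℝ) (hL : 0 ≤ L) (f : E → ℝ) (f' : E → E)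
    (hf : ∀ x, HasGradientAt f (f' x) x)
    (hlip : ∀ x y, ‖f' x - f' y‖ ≤ L * ‖x - y‖) (x y : E) :
    f y ≤ f x + ⟪f' x, y - x⟫ + L / 2 * ‖y - x‖ ^ 2 := by
  set d := y - x with hd
  set g : ℝ → ℝ := fun t => f (x + t • d) - t * ⟪f' x, d⟫ - L * t ^ 2 / 2 * ‖d‖ ^ 2 with hgdef
  have hc : ∀ t : ℝ, HasDerivAt (fun t : ℝ => x + t • d) d t := by
    intro t
    simpa using ((hasDerivAt_id t).smul_const d).const_add x
  have hg : ∀ t : ℝ, HasDerivAt g (⟪f' (x + t • d), d⟫ - ⟪f' x, d⟫ - L * t * ‖d‖ ^ 2) t := by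
    intro t
    have h1 : HasDerivAt (fun t : ℝ => f (x + t • d)) ⟪f' (x + t • d), d⟫ t := by
      have := (hf (x + t • d)).hasFDerivAt.comp_hasDerivAt t (hc t)
      simp at this
      exact this
    have h2 : HasDerivAt (fun t : ℝ => t * ⟪f' x, d⟫) ⟪f' x, d⟫ t := by
      simpa using hasDerivAt_mul_const (⟪f' x, d⟫ : ℝ)
    have h3 : HasDerivAt (fun t : ℝ => L * t ^ 2 / 2 * ‖d‖ ^ 2) (L * t * ‖d‖ ^ 2) t := by
      have := (hasDerivAt_pow 2 t).const_mul (L / 2 * ‖d‖ ^ 2)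
      have e : (fun t : ℝ => L * t ^ 2 / 2 * ‖d‖ ^ 2) = fun y => L / 2 * ‖d‖ ^ 2 * y ^ 2 := by
        funext s; ring
      rw [e]
      exact this.congr_deriv (by norm_num; ring)
    exact (h1.sub h2).sub h3
  have hanti : AntitoneOn g (Set.Icc (0:ℝ) 1) := by
    have hdiff : Differentiable ℝ g := fun t => (hg t).differentiableAt
    apply antitoneOn_of_deriv_nonpos (convex_Icc 0 1) hdiff.continuous.continuousOn
      (fun t _ => (hdiff t).differentiableWithinAt)
    · intro t ht
      rw [interior_Icc] at ht
      rw [(hg t).deriv]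
      have h4 : ⟪f' (x + t • d) - f' x, d⟫ ≤ L * t * ‖d‖ ^ 2 := by
        calc ⟪f' (x + t • d) - f' x, d⟫ ≤ ‖f' (x + t • d) - f' x‖ * ‖d‖ :=
              real_inner_le_norm _ _
          _ ≤ (L * ‖(x + t • d) - x‖) * ‖d‖ := by
              gcongr; exact hlip _ _
          _ = L * t * ‖d‖ ^ 2 := by
              rw [add_sub_cancel_left, norm_smul, Real.norm_eq_abs,
                abs_of_pos ht.1]; ring
      rw [inner_sub_left] at h4
      linarith
  have key : g 1 ≤ g 0 := hanti (by norm_num) (by norm_num) (by norm_num)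
  have e0 : g 0 = f x := by simp [hgdef]
  have e1 : g 1 = f y - ⟪f' x, d⟫ - L / 2 * ‖d‖ ^ 2 := by
    simp only [hgdef, one_smul, one_pow, one_mul]
    rw [hd, add_sub_cancel]
    ring
  rw [e0, e1] at key
  linarith

lemma min_of_convex_add_quad (G : E → ℝ) (hG : ConvexOn ℝ Set.univ G) (x : E) (μ : ℝ)
    (hμ : 0 ≤ μ) (hmin : ∀ y, G x ≤ G y + μ / 2 * ‖y - x‖ ^ 2) (y : E) : G x ≤ G y := by
  by_contra hc
  push_neg at hc
  set C : ℝ := μ / 2 * ‖y - x‖ ^ 2 with hC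
  have hC0 : 0 ≤ C := by positivity
  set ε : ℝ := G x - G y with hε
  have hε0 : 0 < ε := by rw [hε]; linarith
  set t : ℝ := min 1 (ε / (C + 1)) with ht
  have ht0 : 0 < t := lt_min one_pos (by positivity)
  have ht1 : t ≤ 1 := min_le_left _ _
  have hcomb : G ((1 - t) • x + t • y) ≤ (1 - t) * G x + t * G y :=
    hG.2 (Set.mem_univ x) (Set.mem_univ y) (by linarith) (le_of_lt ht0) (by ring)
  have hq : ((1 - t) • x + t • y) - x = t • (y - x) := by
    rw [smul_sub]; module
  have h5 := hmin ((1 - t) • x + t • y)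
  rw [hq] at h5
  have hnorm : ‖t • (y - x)‖ ^ 2 = t ^ 2 * ‖y - x‖ ^ 2 := by
    rw [norm_smul, Real.norm_eq_abs, mul_pow, sq_abs]
  rw [hnorm] at h5
  -- G x ≤ (1-t) G x + t G y + μ/2 t² ‖y-x‖²
  have h6 : G x ≤ (1 - t) * G x + t * G y + t ^ 2 * C := by
    calc G x ≤ G ((1 - t) • x + t • y) + μ / 2 * (t ^ 2 * ‖y - x‖ ^ 2) := h5
      _ ≤ (1 - t) * G x + t * G y + t ^ 2 * C := by rw [hC]; nlinarith [hcomb]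
  -- so t * ε ≤ t² C, i.e. ε ≤ t C ≤ ε * C/(C+1) < ε
  have h7 : ε ≤ t * C := by
    have h6' : t * ε ≤ t * (t * C) := by nlinarith [h6]
    exact le_of_mul_le_mul_left h6' ht0
  have h8 : t * C ≤ ε / (C + 1) * C :=
    mul_le_mul_of_nonneg_right (min_le_right _ _) hC0
  have h9 : ε / (C + 1) * C < ε := by
    rw [div_mul_eq_mul_div, div_lt_iff₀ (by linarith : (0:ℝ) < C + 1)]
    nlinarith
  linarith

lemma affine_convex (w : E) (c : ℝ) : ConvexOn ℝ Set.univ (fun y : E => ⟪y, w⟫ + c) := by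
  refine ⟨convex_univ, fun a _ b _ s t hs ht hst => le_of_eq ?_⟩
  simp only [inner_add_left, real_inner_smul_left, smul_eq_mul]
  linear_combination -c * hst

end Aux

theorem composite_one_step_descent
    {p : ℕ} (hp : 1 ≤ p) (ρ γ L : ℝ) (hρ : 0 ≤ ρ) (hγ : 0 < γ) (hγρ : γ * ρ < 1)
    (hL : 0 ≤ L)
    (φ : EuclideanSpace ℝ (Fin p) → ℝ)
    (hφlsc : LowerSemicontinuous φ)
    (hφwc : ConvexOn ℝ Set.univ (fun y => φ y + ρ / 2 * ‖y‖ ^ 2))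
    (prox : EuclideanSpace ℝ (Fin p) → EuclideanSpace ℝ (Fin p))
    (hprox : ∀ z, IsMinOn (fun y => φ y + ‖y - z‖ ^ 2 / (2 * γ)) Set.univ (prox z))
    (hproxUnique : ∀ z u,
      IsMinOn (fun y => φ y + ‖y - z‖ ^ 2 / (2 * γ)) Set.univ u → u = prox z)
    (f : EuclideanSpace ℝ (Fin p) → ℝ)
    (f' : EuclideanSpace ℝ (Fin p) → EuclideanSpace ℝ (Fin p))
    (hf : ∀ x, HasGradientAt f (f' x) x)
    (hlip : ∀ x y, ‖f' x - f' y‖ ≤ L * ‖x - y‖)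
    (ψ : EuclideanSpace ℝ (Fin p) → ℝ) (hψ : ∀ x, ψ x = f x + φ x)
    (Fnor : EuclideanSpace ℝ (Fin p) → EuclideanSpace ℝ (Fin p))
    (hFnor : ∀ z, Fnor z = f' (prox z) + γ⁻¹ • (z - prox z)) :
    ∀ z₁ z₂ : EuclideanSpace ℝ (Fin p),
      ψ (prox z₂) ≤ ψ (prox z₁) + ⟪Fnor z₁, prox z₂ - prox z₁⟫
        + ((L + ρ) / 2 - 1 / γ) * ‖prox z₂ - prox z₁‖ ^ 2
        + γ⁻¹ * ⟪z₂ - z₁, prox z₂ - prox z₁⟫ := by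
  intro z₁ z₂
  set x₁ := prox z₁ with hx₁
  set x₂ := prox z₂ with hx₂
  set d := x₂ - x₁ with hd
  set μ : ℝ := 1 / γ - ρ with hμdef
  have hμ0 : 0 < μ := by
    rw [hμdef, sub_pos, lt_div_iff₀ hγ]
    linarith [hγρ]
  -- Step 1: descent lemma for f
  have step1 : f x₂ ≤ f x₁ + ⟪f' x₁, d⟫ + L / 2 * ‖d‖ ^ 2 :=
    descent_lemma L hL f f' hf hlip x₁ x₂
  -- Step 2: strong minimality of prox
  set w := μ • x₂ - γ⁻¹ • z₂ with hw
  set c : ℝ := ‖z₂‖ ^ 2 / (2 * γ) - μ / 2 * ‖x₂‖ ^ 2 with hc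
  set G := fun y => φ y + ‖y - z₂‖ ^ 2 / (2 * γ) - μ / 2 * ‖y - x₂‖ ^ 2 with hG
  have hGeq : ∀ y, G y = (φ y + ρ / 2 * ‖y‖ ^ 2) + (⟪y, w⟫ + c) := by
    intro y
    have e1 : ‖y - z₂‖ ^ 2 = ‖y‖ ^ 2 - 2 * ⟪y, z₂⟫ + ‖z₂‖ ^ 2 := by
      rw [← real_inner_self_eq_norm_sq, ← real_inner_self_eq_norm_sq,
        ← real_inner_self_eq_norm_sq]
      rw [inner_sub_sub_self]
      linear_combination real_inner_comm z₂ y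
    have e2 : ‖y - x₂‖ ^ 2 = ‖y‖ ^ 2 - 2 * ⟪y, x₂⟫ + ‖x₂‖ ^ 2 := by
      rw [← real_inner_self_eq_norm_sq, ← real_inner_self_eq_norm_sq,
        ← real_inner_self_eq_norm_sq]
      rw [inner_sub_sub_self]
      linear_combination real_inner_comm x₂ y
    have e3 : ⟪y, w⟫ = μ * ⟪y, x₂⟫ - γ⁻¹ * ⟪y, z₂⟫ := by
      rw [hw, inner_sub_right, real_inner_smul_right, real_inner_smul_right]
    rw [hG]
    simp only
    rw [e1, e2, e3, hc, hμdef]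
    field_simp
    ring
  have hGconv : ConvexOn ℝ Set.univ G := by
    have := hφwc.add (affine_convex w c)
    exact this.congr (fun y _ => (hGeq y).symm)
  have hGmin : ∀ y, G x₂ ≤ G y + μ / 2 * ‖y - x₂‖ ^ 2 := by
    intro y
    have := hprox z₂ (Set.mem_univ y)
    simp only [Set.mem_setOf_eq] at this
    rw [hG]
    simp only [sub_self, norm_zero]
    norm_num
    linarith [this]
  have hGx : G x₂ ≤ G x₁ := min_of_convex_add_quad G hGconv x₂ μ (le_of_lt hμ0) hGmin x₁
  -- unfold: φ x₂ + ‖x₂-z₂‖²/(2γ) ≤ φ x₁ + ‖x₁-z₂‖²/(2γ) - μ/2 ‖d‖²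
  have hnormd : ‖x₁ - x₂‖ = ‖d‖ := by rw [hd, ← norm_neg]; congr 1; abel
  have step2' : φ x₂ + ‖x₂ - z₂‖ ^ 2 / (2 * γ) ≤
      φ x₁ + ‖x₁ - z₂‖ ^ 2 / (2 * γ) - μ / 2 * ‖d‖ ^ 2 := by
    have := hGx
    rw [hG] at this
    simp only [sub_self, norm_zero] at this
    rw [hnormd] at this
    norm_num at this
    linarith
  have hexp : ‖x₁ - z₂‖ ^ 2 = ‖x₂ - z₂‖ ^ 2 - 2 * ⟪x₂ - z₂, d⟫ + ‖d‖ ^ 2 := by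
    have : x₁ - z₂ = (x₂ - z₂) - d := by rw [hd]; abel
    rw [this, ← real_inner_self_eq_norm_sq, ← real_inner_self_eq_norm_sq,
      ← real_inner_self_eq_norm_sq, inner_sub_sub_self]
    linear_combination real_inner_comm d (x₂ - z₂)
  have step2 : φ x₂ ≤ φ x₁ + γ⁻¹ * ⟪z₂ - x₂, d⟫ + ρ / 2 * ‖d‖ ^ 2 := by
    have hA : ⟪z₂ - x₂, d⟫ = -⟪x₂ - z₂, d⟫ := by
      rw [← inner_neg_left]; congr 1; abel
    rw [hexp] at step2'
    rw [hA]
    set A : ℝ := ⟪x₂ - z₂, d⟫ with hAdef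
    set N : ℝ := ‖d‖ ^ 2 with hN
    have hγne : γ ≠ 0 := ne_of_gt hγ
    have expand : (‖x₂ - z₂‖ ^ 2 - 2 * A + N) / (2 * γ) =
        ‖x₂ - z₂‖ ^ 2 / (2 * γ) - γ⁻¹ * A + N / (2 * γ) := by
      field_simp
    have expand2 : N / (2 * γ) - μ / 2 * N = ρ / 2 * N := by
      rw [hμdef]
      field_simp
      ring
    rw [expand] at step2'
    linarith
  -- Step 3: combine
  have hFn : ⟪Fnor z₁, d⟫ = ⟪f' x₁, d⟫ + γ⁻¹ * ⟪z₁ - x₁, d⟫ := by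
    rw [hFnor z₁, inner_add_left, real_inner_smul_left, ← hx₁]
  have hinner : ⟪z₂ - x₂, d⟫ = ⟪z₁ - x₁, d⟫ - ⟪d, d⟫ + ⟪z₂ - z₁, d⟫ := by
    have : z₂ - x₂ = (z₁ - x₁) - d + (z₂ - z₁) := by rw [hd]; abel
    rw [this, inner_add_left, inner_sub_left]
  have hdd : ⟪d, d⟫ = ‖d‖ ^ 2 := real_inner_self_eq_norm_sq d
  rw [hψ, hψ, hFn]
  rw [hinner, hdd] at step2
  have e : γ⁻¹ * (⟪z₁ - x₁, d⟫ - ‖d‖ ^ 2 + ⟪z₂ - z₁, d⟫) =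
      γ⁻¹ * ⟪z₁ - x₁, d⟫ - γ⁻¹ * ‖d‖ ^ 2 + γ⁻¹ * ⟪z₂ - z₁, d⟫ := by ring
  rw [e] at step2
  have e2 : ((L + ρ) / 2 - 1 / γ) * ‖d‖ ^ 2 =
      L / 2 * ‖d‖ ^ 2 + ρ / 2 * ‖d‖ ^ 2 - γ⁻¹ * ‖d‖ ^ 2 := by
    rw [one_div]; ring
  rw [e2]
  linarith
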